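/- Let S^{(1)}, …, S^{(v)} be independent copies of a ℤ^d-valued random walk, suppose sup_x P(S_m = x) ≤ φ(m) with φ non-increasing, and P(S_u ± S'_v = 0) ≤ φ(u+v) for independent copies S, S'. Then for any 0 ≤ j_1 ≤ ⋯ ≤ j_v and signs δ_t ∈ {−1, +1}, ∑_{x ∈ ℤ^d} ∏_{t=1}^v P(S^{(t)}_{j_t} = δ_t x) ≤ ∏_{t=2}^v φ(j_t ∨ j_1). -/

import Mathlib

open Finset

lemma pmf_summable_toReal {d : ℕ} (q : PMF (Fin d → ℤ)) :
    Summable (fun x => (q x).toReal) := by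
  apply ENNReal.summable_toReal
  rw [q.tsum_coe]; exact ENNReal.one_ne_top

lemma pmf_tsum_toReal {d : ℕ} (q : PMF (Fin d → ℤ)) :
    ∑' x, (q x).toReal = 1 := by
  rw [← ENNReal.tsum_toReal_eq (fun x => q.apply_ne_top x), q.tsum_coe, ENNReal.toReal_one]

lemma sign_involutive {d : ℕ} (ε : ℤ) (hε : ε * ε = 1) :
    Function.Involutive (fun x : Fin d → ℤ => fun i => ε * x i) := by
  intro x; funext i; simp only [← mul_assoc, hε, one_mul]

/-- If `p m` is the law of `S_m`, `sup_x P(S_m = x) ≤ φ(m)` with `φ` non-increasing, and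
`P(S_u = ε S'_w) ≤ φ(u+w)` for independent copies and signs `ε = ±1`, then for any
`0 ≤ j_1 ≤ ⋯ ≤ j_v` and signs `δ_t ∈ {±1}`,
`∑_x ∏_t P(S^{(t)}_{j_t} = δ_t x) ≤ ∏_{t=2}^v φ(j_t ∨ j_1)`. -/
theorem stmt_4 {d : ℕ} (p : ℕ → PMF (Fin d → ℤ)) (φ : ℕ → ℝ) (hφ : Antitone φ)
    (hsup : ∀ m : ℕ, ∀ x : Fin d → ℤ, (p m x).toReal ≤ φ m)
    (hconv : ∀ u w : ℕ, ∀ ε : ℤ, (ε = 1 ∨ ε = -1) →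
      (∑' x : Fin d → ℤ, (p u x).toReal * (p w (fun i => ε * x i)).toReal) ≤ φ (u + w)) :
    ∀ (v : ℕ) (j : Fin (v + 1) → ℕ), Monotone j →
      ∀ δ : Fin (v + 1) → ℤ, (∀ t, δ t = 1 ∨ δ t = -1) →
        (∑' x : Fin d → ℤ, ∏ t : Fin (v + 1), (p (j t) (fun i => δ t * x i)).toReal)
          ≤ ∏ t ∈ Finset.univ.erase (0 : Fin (v + 1)), φ (max (j t) (j 0)) := by
  have hφ0 : ∀ m, 0 ≤ φ m := fun m =>
    le_trans ENNReal.toReal_nonneg (hsup m (fun _ => 0))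
  intro v
  match v with
  | 0 =>
    intro j hj δ hδ
    have he : (Finset.univ.erase (0 : Fin 1)) = ∅ := by decide
    rw [he, Finset.prod_empty]
    have hprod : ∀ x : Fin d → ℤ,
        (∏ t : Fin (0 + 1), (p (j t) (fun i => δ t * x i)).toReal)
          = (p (j 0) (fun i => δ 0 * x i)).toReal := fun x => by simp
    rw [tsum_congr hprod]
    have hsq : δ 0 * δ 0 = 1 := by rcases hδ 0 with h | h <;> rw [h] <;> ring
    have hI := sign_involutive (d := d) (δ 0) hsq
    have key : ∑' x : Fin d → ℤ, (p (j 0) (fun i => δ 0 * x i)).toReal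
        = ∑' x, (p (j 0) x).toReal :=
      Equiv.tsum_eq hI.toPerm (fun x => (p (j 0) x).toReal)
    rw [key, pmf_tsum_toReal]
  | n + 1 =>
    intro j hj δ hδ
    set F : Fin (n + 2) → (Fin d → ℤ) → ℝ :=
      fun t x => (p (j t) (fun i => δ t * x i)).toReal with hF
    have hF0 : ∀ t x, 0 ≤ F t x := fun t x => ENNReal.toReal_nonneg
    have hFle1 : ∀ t x, F t x ≤ 1 := fun t x => by
      have := (p (j t)).coe_le_one (fun i => δ t * x i)
      simpa using ENNReal.toReal_mono ENNReal.one_ne_top this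
    have hFφ : ∀ t x, F t x ≤ φ (j t) := fun t x => hsup _ _
    have h10 : (1 : Fin (n + 2)) ≠ 0 := one_ne_zero
    set s : Finset (Fin (n + 2)) := (Finset.univ.erase 0).erase 1 with hs
    set C : ℝ := ∏ t ∈ s, φ (j t) with hC
    have hC0 : 0 ≤ C := Finset.prod_nonneg (fun t _ => hφ0 _)
    have hmem1 : (1 : Fin (n + 2)) ∈ Finset.univ.erase (0 : Fin (n + 2)) :=
      Finset.mem_erase.2 ⟨h10, Finset.mem_univ _⟩
    have hsplit : ∀ x, ∏ t, F t x = F 0 x * (F 1 x * ∏ t ∈ s, F t x) := by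
      intro x
      rw [← Finset.mul_prod_erase Finset.univ (fun t => F t x) (Finset.mem_univ 0),
        ← Finset.mul_prod_erase _ (fun t => F t x) hmem1]
    -- summability facts
    have hsq : δ 0 * δ 0 = 1 := by rcases hδ 0 with h | h <;> rw [h] <;> ring
    have hI := sign_involutive (d := d) (δ 0) hsq
    have hsum0 : Summable (F 0) := by
      have h := Summable.comp_injective (pmf_summable_toReal (p (j 0)))
        (Function.Involutive.toPerm _ hI).injective
      exact h
    have hsum01 : Summable (fun x => F 0 x * F 1 x) :=
      Summable.of_nonneg_of_le (fun x => mul_nonneg (hF0 0 x) (hF0 1 x))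
        (fun x => mul_le_of_le_one_right (hF0 0 x) (hFle1 1 x)) hsum0
    have hsumprod : Summable (fun x => ∏ t, F t x) := by
      refine Summable.of_nonneg_of_le (fun x => Finset.prod_nonneg fun t _ => hF0 t x)
        (fun x => ?_) hsum0
      rw [hsplit x]
      refine mul_le_of_le_one_right (hF0 0 x) ?_
      refine mul_le_one₀ (hFle1 1 x) (Finset.prod_nonneg fun t _ => hF0 t x) ?_
      exact Finset.prod_le_one (fun t _ => hF0 t x) (fun t _ => hFle1 t x)
    -- pointwise bound
    have hpt : ∀ x, ∏ t, F t x ≤ F 0 x * F 1 x * C := by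
      intro x
      rw [hsplit x, mul_assoc]
      refine mul_le_mul_of_nonneg_left (mul_le_mul_of_nonneg_left ?_ (hF0 1 x)) (hF0 0 x)
      exact Finset.prod_le_prod (fun t _ => hF0 t x) (fun t _ => hFφ t x)
    -- change of variables for the two-factor sum
    have hchg : ∑' x, F 0 x * F 1 x
        = ∑' y : Fin d → ℤ,
            (p (j 0) y).toReal * (p (j 1) (fun i => (δ 0 * δ 1) * y i)).toReal := by
      rw [← Equiv.tsum_eq hI.toPerm
        (fun y => (p (j 0) y).toReal * (p (j 1) (fun i => (δ 0 * δ 1) * y i)).toReal)]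
      refine tsum_congr fun x => ?_
      have : (fun i => (δ 0 * δ 1) * ((fun i => δ 0 * x i) i)) = fun i => δ 1 * x i := by
        funext i
        have : δ 0 * δ 1 * (δ 0 * x i) = δ 0 * δ 0 * (δ 1 * x i) := by ring
        rw [this, hsq, one_mul]
      simp only [Function.Involutive.coe_toPerm]
      rw [this]
    have hεsign : δ 0 * δ 1 = 1 ∨ δ 0 * δ 1 = -1 := by
      rcases hδ 0 with h | h <;> rcases hδ 1 with h' | h' <;> rw [h, h'] <;> norm_num
    have h2 : ∑' x, F 0 x * F 1 x ≤ φ (j 0 + j 1) := by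
      rw [hchg]; exact hconv (j 0) (j 1) (δ 0 * δ 1) hεsign
    -- assemble
    calc ∑' x : Fin d → ℤ, ∏ t, F t x
        ≤ ∑' x, F 0 x * F 1 x * C := Summable.tsum_le_tsum hpt hsumprod (hsum01.mul_right C)
      _ = (∑' x, F 0 x * F 1 x) * C := tsum_mul_right
      _ ≤ φ (j 1) * C := by
          refine mul_le_mul_of_nonneg_right (h2.trans (hφ ?_)) hC0
          exact Nat.le_add_left _ _
      _ = ∏ t ∈ Finset.univ.erase (0 : Fin (n + 2)), φ (j t) := by
          rw [← Finset.mul_prod_erase _ (fun t => φ (j t)) hmem1]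
      _ = ∏ t ∈ Finset.univ.erase (0 : Fin (n + 2)), φ (max (j t) (j 0)) := by
          refine Finset.prod_congr rfl fun t _ => ?_
          rw [max_eq_left (hj (Fin.zero_le t))]
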